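/- Double-bounded key identity for Schur's theorem: for all nonnegative integers j, k, L, M, ∑_{b,c,bc ≥ 0, b+bc=j, c+bc=k} q^{T_{b+c+bc} + T_{bc}} [L-k choose j-bc]_q [M-j choose k-bc]_q [M-b-c-bc choose bc]_q = q^{T_j + T_k} [L choose j]_q [M-j choose k]_q. -/

import Mathlib

open Finset

noncomputable section

abbrev K : Type := RatFunc ℚ

def q : K := RatFunc.X

/-- Extended q-Pochhammer symbol `(a;q)_n` for integer `n`. -/
def poch (a : K) (n : ℤ) : K :=
  if 0 ≤ n then ∏ j ∈ Finset.range n.toNat, (1 - a * q ^ j)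
  else (∏ j ∈ Finset.range (-n).toNat, (1 - a * q ^ (-(j + 1 : ℤ))))⁻¹

/-- Extended Gaussian binomial coefficient `[n choose m]_q`. -/
def qbinom (n m : ℤ) : K :=
  if 0 ≤ m then poch (q ^ (n - m + 1)) m / poch q m else 0

/-- Triangular number `T_n = n(n+1)/2`. -/
def T (n : ℤ) : ℤ := n * (n + 1) / 2


lemma q_ne_zero : q ≠ 0 := RatFunc.X_ne_zero

lemma q_pow_ne_one (n : ℕ) (h : n ≠ 0) : q ^ n ≠ 1 := by
  intro he
  have h1 : (algebraMap (Polynomial ℚ) K) (Polynomial.X ^ n) = algebraMap (Polynomial ℚ) K 1 := by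
    simpa [map_pow, q] using he
  have h2 := RatFunc.algebraMap_injective ℚ h1
  have := congrArg Polynomial.natDegree h2
  simp [Polynomial.natDegree_X_pow] at this
  exact h this

lemma q_zpow_ne_one (t : ℤ) (h : t ≠ 0) : q ^ t ≠ 1 := by
  rcases lt_trichotomy t 0 with ht | ht | ht
  · intro he
    have : q ^ (-t) = 1 := by
      have := congrArg (·⁻¹) he
      simpa [← zpow_neg] using this
    rw [show (-t) = ((-t).toNat : ℤ) by omega, zpow_natCast] at this
    exact q_pow_ne_one _ (by omega) this
  · exact absurd ht h
  · rw [show t = (t.toNat : ℤ) by omega, zpow_natCast]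
    exact q_pow_ne_one _ (by omega)

lemma one_sub_q_zpow_ne_zero (t : ℤ) (h : t ≠ 0) : 1 - q ^ t ≠ 0 := by
  intro he
  exact q_zpow_ne_one t h (by linear_combination -he)


lemma poch_nat (a : K) (n : ℕ) : poch a n = ∏ j ∈ Finset.range n, (1 - a * q ^ j) := by
  unfold poch
  rw [if_pos (Int.natCast_nonneg n), Int.toNat_natCast]

lemma poch_zero (a : K) : poch a 0 = 1 := by
  unfold poch
  simp

lemma poch_succ (a : K) (n : ℕ) : poch a (↑(n+1)) = poch a n * (1 - a * q ^ n) := by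
  rw [poch_nat, poch_nat, prod_range_succ]

lemma poch_succ' (a : K) (n : ℕ) : poch a (↑(n+1)) = (1 - a) * poch (a * q) n := by
  rw [poch_nat, poch_nat, prod_range_succ']
  simp only [pow_zero, mul_one]
  rw [mul_comm]
  congr 1
  refine Finset.prod_congr rfl fun i _ => ?_
  rw [pow_succ']
  ring

lemma poch_add (a : K) (m n : ℕ) : poch a (↑(m+n)) = poch a m * poch (a * q ^ m) n := by
  rw [poch_nat, poch_nat, poch_nat, prod_range_add]
  congr 1
  refine Finset.prod_congr rfl fun i _ => ?_
  rw [pow_add]; ring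

lemma poch_zpow_ne_zero (s : ℤ) (hs : 0 < s) (n : ℕ) : poch (q ^ s) n ≠ 0 := by
  rw [poch_nat]
  refine Finset.prod_ne_zero_iff.mpr fun i _ => ?_
  have : q ^ s * q ^ i = q ^ (s + i) := by
    rw [← zpow_natCast q i, ← zpow_add₀ q_ne_zero]
  rw [this]
  exact one_sub_q_zpow_ne_zero _ (by omega)

lemma poch_q_ne_zero (n : ℕ) : poch q n ≠ 0 := by
  have := poch_zpow_ne_zero 1 one_pos n
  rwa [zpow_one] at this

lemma qbinom_nat (n : ℤ) (m : ℕ) : qbinom n m = poch (q ^ (n - m + 1)) m / poch q m := by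
  simp [qbinom]

lemma qbinom_zero (n : ℤ) : qbinom n 0 = 1 := by
  simp [qbinom, poch_zero]

lemma qbinom_of_neg (n m : ℤ) (h : m < 0) : qbinom n m = 0 := by
  simp [qbinom, not_le.mpr h]

lemma qbinom_eq_zero (n m : ℤ) (h0 : 0 ≤ n) (h : n < m) : qbinom n m = 0 := by
  obtain ⟨mm, rfl⟩ : ∃ mm : ℕ, m = mm := ⟨m.toNat, by omega⟩
  rw [qbinom_nat, poch_nat]
  have hmem : (mm - n.toNat - 1 : ℕ) ∈ Finset.range mm := by
    simp only [Finset.mem_range]; omega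
  rw [Finset.prod_eq_zero hmem, zero_div]
  have : q ^ (n - ↑mm + 1) * q ^ (mm - n.toNat - 1 : ℕ) = 1 := by
    rw [← zpow_natCast q (mm - n.toNat - 1 : ℕ), ← zpow_add₀ q_ne_zero, ← zpow_zero q]
    congr 1
    omega
  rw [this]
  ring

lemma pascal (N : ℤ) (b : ℕ) :
    qbinom (N+1) b = q ^ (b:ℤ) * qbinom N b + qbinom N ((b:ℤ) - 1) := by
  cases b with
  | zero =>
    simp [qbinom_zero, qbinom_of_neg N (-1) (by norm_num)]
  | succ t =>
    have hq : q ^ ((t:ℤ)+1) * q ^ (N - t) = q ^ (N+1) := by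
      rw [← zpow_add₀ q_ne_zero]; ring_nf
    have A : poch (q ^ (N - t + 1)) (↑(t+1)) = poch (q ^ (N - t + 1)) t * (1 - q ^ (N+1)) := by
      rw [poch_succ]
      congr 2
      rw [← zpow_natCast q t, ← zpow_add₀ q_ne_zero]
      congr 1; ring
    have B : poch (q ^ (N - t)) (↑(t+1)) = (1 - q ^ (N - t)) * poch (q ^ (N - t + 1)) t := by
      rw [poch_succ']
      congr 2
      exact (zpow_add_one₀ q_ne_zero _).symm
    have C : poch q (↑(t+1)) = poch q t * (1 - q ^ ((t:ℤ)+1)) := by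
      rw [poch_succ]
      congr 2
      rw [mul_comm, ← zpow_natCast q t, ← zpow_add_one₀ q_ne_zero]
    have e1 : qbinom (N+1) (↑(t+1)) = poch (q ^ (N - t + 1)) (↑(t+1)) / poch q (↑(t+1)) := by
      rw [qbinom_nat]; congr 3; push_cast; ring
    have e2 : qbinom N (↑(t+1)) = poch (q ^ (N - t)) (↑(t+1)) / poch q (↑(t+1)) := by
      rw [qbinom_nat]; congr 3; push_cast; ring
    have e3 : qbinom N ((↑(t+1):ℤ) - 1) = poch (q ^ (N - t + 1)) t / poch q t := by
      rw [show ((↑(t+1):ℤ) - 1) = (t:ℤ) by push_cast; ring, qbinom_nat]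
    rw [e1, e2, e3, A, B, C]
    have h1 : poch q t ≠ 0 := poch_q_ne_zero t
    have h2 : (1 - q ^ ((t:ℤ)+1)) ≠ 0 := one_sub_q_zpow_ne_zero _ (by omega)
    field_simp
    rw [← hq]
    push_cast
    ring

lemma vand (m : ℤ) (n r : ℕ) :
    (∑ a ∈ Finset.range (r+1),
      q ^ ((a:ℤ) * ((n:ℤ) - r + a)) * qbinom m a * qbinom n ((r:ℤ) - a))
    = qbinom (m + n) r := by
  induction n generalizing r with
  | zero =>
    rw [Finset.sum_eq_single_of_mem r (self_mem_range_succ r)]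
    · simp [qbinom_zero]
    · intro b hb hbr
      have hb' : b < r := by
        have := Finset.mem_range.mp hb; omega
      simp only [Nat.cast_zero]
      rw [qbinom_eq_zero 0 ((r:ℤ) - b) le_rfl (by omega)]
      ring
  | succ n ih =>
    have step : ∀ a ∈ Finset.range (r+1),
        q ^ ((a:ℤ) * ((↑(n+1):ℤ) - r + a)) * qbinom m a * qbinom (↑(n+1)) ((r:ℤ) - a)
        = q ^ (r:ℤ) * (q ^ ((a:ℤ) * ((n:ℤ) - r + a)) * qbinom m a * qbinom n ((r:ℤ) - a))
          + q ^ ((a:ℤ) * ((n:ℤ) - ((r:ℤ)-1) + a)) * qbinom m a * qbinom n ((r:ℤ) - 1 - a) := by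
      intro a ha
      have haa : a ≤ r := Nat.lt_succ_iff.mp (Finset.mem_range.mp ha)
      have h1 : ((r:ℤ) - a) = ((r - a : ℕ) : ℤ) := by push_cast [haa]; ring
      have hp : qbinom (↑(n+1)) ((r:ℤ) - a)
          = q ^ ((r:ℤ)-a) * qbinom n ((r:ℤ)-a) + qbinom n ((r:ℤ)-a-1) := by
        have hh := pascal (n:ℤ) (r - a)
        rw [← h1] at hh
        rw [show ((n:ℕ):ℤ)+1 = ((n+1:ℕ):ℤ) by push_cast; ring] at hh
        exact hh
      rw [hp, mul_add]
      congr 1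
      · have hz : q ^ ((a:ℤ) * ((↑(n+1):ℤ) - r + a)) * q ^ ((r:ℤ)-a)
            = q ^ (r:ℤ) * q ^ ((a:ℤ) * ((n:ℤ) - r + a)) := by
          rw [← zpow_add₀ q_ne_zero, ← zpow_add₀ q_ne_zero]
          congr 1; push_cast; ring
        linear_combination (qbinom m a * qbinom n ((r:ℤ) - a)) * hz
      · rw [show ((a:ℤ) * ((↑(n+1):ℤ) - r + a)) = ((a:ℤ) * ((n:ℤ) - ((r:ℤ)-1) + a)) by
          push_cast; ring,
          show (r:ℤ) - a - 1 = (r:ℤ) - 1 - a by ring]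
    rw [Finset.sum_congr rfl step, Finset.sum_add_distrib, ← Finset.mul_sum, ih r]
    have h2 : (∑ a ∈ Finset.range (r+1),
        q ^ ((a:ℤ) * ((n:ℤ) - ((r:ℤ)-1) + a)) * qbinom m a * qbinom n ((r:ℤ) - 1 - a))
        = qbinom (m + n) ((r:ℤ) - 1) := by
      cases r with
      | zero => simp [qbinom_of_neg (m+n) (-1) (by norm_num),
          qbinom_of_neg (n:ℤ) (-1) (by norm_num)]
      | succ s =>
        rw [Finset.sum_range_succ,
          show ((s+1:ℕ):ℤ) - 1 - ((s+1:ℕ):ℤ) = -1 by ring,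
          qbinom_of_neg (n:ℤ) (-1) (by norm_num), mul_zero, add_zero,
          show ((s+1:ℕ):ℤ) - 1 = (s:ℤ) by push_cast; ring]
        exact ih s
    rw [h2, show m + ((n+1:ℕ):ℤ) = (m + (n:ℤ)) + 1 by push_cast; ring, pascal]

lemma trinom (n : ℤ) (a b : ℕ) :
    qbinom n a * qbinom (n - a) b = qbinom n ↑(a+b) * qbinom ↑(a+b) b := by
  have pa := poch_q_ne_zero a
  have pb := poch_q_ne_zero b
  have pab : poch (q ^ ((a:ℤ)+1)) b ≠ 0 := poch_zpow_ne_zero _ (by omega) b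
  have e3 : qbinom n ↑(a+b) = poch (q^(n - a - b + 1)) ↑(a+b) / poch q ↑(a+b) := by
    rw [qbinom_nat, show n - ↑(a+b) + 1 = n - a - b + 1 by push_cast; ring]
  have e4 : qbinom ↑(a+b) b = poch (q^((a:ℤ)+1)) b / poch q b := by
    rw [qbinom_nat, show ((a+b:ℕ):ℤ) - b + 1 = (a:ℤ)+1 by push_cast; ring]
  have s1 : poch (q^(n - a - b + 1)) ↑(a+b)
      = poch (q^(n - a - b + 1)) b * poch (q^(n - a + 1)) a := by
    rw [show a + b = b + a from Nat.add_comm a b, poch_add,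
      show q^(n - ↑a - ↑b + 1) * q^b = q^(n - ↑a + 1) by
        rw [← zpow_natCast q b, ← zpow_add₀ q_ne_zero]; congr 1; ring]
  have s2 : poch q ↑(a+b) = poch q a * poch (q^((a:ℤ)+1)) b := by
    rw [poch_add, show q * q^a = q^((a:ℤ)+1) by
      rw [mul_comm, ← zpow_natCast q a, ← zpow_add_one₀ q_ne_zero]]
  rw [qbinom_nat n a, qbinom_nat (n - a) b, e3, e4, s1, s2]
  field_simp


lemma two_T (n : ℤ) : 2 * T n = n * (n + 1) :=
  Int.mul_ediv_cancel' (Int.even_mul_succ_self n).two_dvd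

lemma T_key (x y z : ℤ) : T (y + z) + T (x - z) = T x + T y + z * (y - x + z) := by
  apply mul_left_cancel₀ (two_ne_zero (α := ℤ))
  linear_combination two_T (y+z) + two_T (x-z) - two_T x - two_T y


theorem schur_double_bounded (j k L M : ℕ) :
    (∑ b ∈ Finset.range (j + 1), ∑ c ∈ Finset.range (k + 1),
      ∑ bc ∈ Finset.range (min j k + 1),
        if b + bc = j ∧ c + bc = k then
          q ^ (T ((b : ℤ) + c + bc) + T (bc : ℤ)) *
            qbinom ((L : ℤ) - k) ((j : ℤ) - bc) * qbinom ((M : ℤ) - j) ((k : ℤ) - bc) *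
            qbinom ((M : ℤ) - b - c - bc) (bc : ℤ)
        else 0) =
      q ^ (T (j : ℤ) + T (k : ℤ)) * qbinom (L : ℤ) (j : ℤ) * qbinom ((M : ℤ) - j) (k : ℤ) := by
  conv_lhs => enter [2, b]; rw [Finset.sum_comm]
  rw [Finset.sum_comm]
  have collapse : ∀ i ∈ Finset.range (j ⊓ k + 1),
      (∑ b ∈ Finset.range (j + 1), ∑ c ∈ Finset.range (k + 1),
        if b + i = j ∧ c + i = k then
          q ^ (T ((b : ℤ) + c + i) + T (i : ℤ)) *
            qbinom ((L : ℤ) - k) ((j : ℤ) - i) * qbinom ((M : ℤ) - j) ((k : ℤ) - i) *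
            qbinom ((M : ℤ) - b - c - i) (i : ℤ)
        else 0)
      = qbinom ((M : ℤ) - j) (k : ℤ) *
          (q ^ (T ((j:ℤ) + k - i) + T (i:ℤ)) * qbinom ((L:ℤ) - k) ((j:ℤ) - i)
            * qbinom (k : ℤ) (i : ℤ)) := by
    intro i hi
    have hij : i ≤ j := by have := Finset.mem_range.mp hi; omega
    have hik : i ≤ k := by have := Finset.mem_range.mp hi; omega
    rw [Finset.sum_eq_single_of_mem (j - i) (Finset.mem_range.mpr (by omega))]
    · rw [Finset.sum_eq_single_of_mem (k - i) (Finset.mem_range.mpr (by omega))]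
      · rw [if_pos ⟨by omega, by omega⟩]
        have c1 : ((j - i : ℕ) : ℤ) = (j:ℤ) - i := by push_cast [hij]; ring
        have c2 : ((k - i : ℕ) : ℤ) = (k:ℤ) - i := by push_cast [hik]; ring
        rw [c1, c2]
        have tr := trinom ((M:ℤ) - j) (k - i) i
        rw [c2, show (k - i) + i = k from by omega] at tr
        rw [show (M:ℤ) - ((j:ℤ)-(i:ℤ)) - ((k:ℤ)-(i:ℤ)) - (i:ℤ)
            = ((M:ℤ) - (j:ℤ)) - ((k:ℤ) - (i:ℤ)) by ring,
          show (j:ℤ)-(i:ℤ) + ((k:ℤ)-(i:ℤ)) + (i:ℤ) = (j:ℤ) + k - i by ring]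
        linear_combination (q ^ (T ((j:ℤ) + k - i) + T (i:ℤ))
          * qbinom ((L:ℤ) - k) ((j:ℤ) - i)) * tr
      · intro c hc hne
        rw [if_neg]
        rintro ⟨h1, h2⟩
        exact hne (by omega)
    · intro b hb hne
      apply Finset.sum_eq_zero
      intro c hc
      rw [if_neg]
      rintro ⟨h1, h2⟩
      exact hne (by omega)
  rw [Finset.sum_congr rfl collapse, ← Finset.mul_sum]
  have hext : (∑ i ∈ Finset.range (j ⊓ k + 1),
      q ^ (T ((j:ℤ) + k - i) + T (i:ℤ)) * qbinom ((L:ℤ) - k) ((j:ℤ) - i)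
        * qbinom (k : ℤ) (i : ℤ))
      = ∑ i ∈ Finset.range (j + 1),
      q ^ (T ((j:ℤ) + k - i) + T (i:ℤ)) * qbinom ((L:ℤ) - k) ((j:ℤ) - i)
        * qbinom (k : ℤ) (i : ℤ) := by
    rcases le_or_gt j k with h | h
    · rw [min_eq_left h]
    · rw [min_eq_right h.le]
      apply Finset.sum_subset (Finset.range_subset_range.mpr (by omega))
      intro i hi hni
      have h1 : k < i := by
        have := Finset.mem_range.mp hi
        simp only [Finset.mem_range] at hni
        omega
      rw [qbinom_eq_zero (k:ℤ) (i:ℤ) (by positivity) (by exact_mod_cast h1), mul_zero]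
  rw [hext, ← Finset.sum_range_reflect]
  have hterm : ∀ a ∈ Finset.range (j + 1),
      q ^ (T ((j:ℤ) + k - (j + 1 - 1 - a : ℕ)) + T ((j + 1 - 1 - a : ℕ) : ℤ))
        * qbinom ((L:ℤ) - k) ((j:ℤ) - (j + 1 - 1 - a : ℕ))
        * qbinom (k : ℤ) ((j + 1 - 1 - a : ℕ) : ℤ)
      = q ^ (T (j:ℤ) + T (k:ℤ)) *
        (q ^ ((a:ℤ) * ((k:ℤ) - j + a)) * qbinom ((L:ℤ) - k) (a:ℤ)
          * qbinom (k:ℤ) ((j:ℤ) - a)) := by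
    intro a ha
    have haj : a ≤ j := by have := Finset.mem_range.mp ha; omega
    have c1 : ((j + 1 - 1 - a : ℕ) : ℤ) = (j:ℤ) - a := by
      simp only [Nat.add_sub_cancel]; push_cast [haj]; ring
    rw [c1,
      show (j:ℤ) + k - ((j:ℤ) - a) = (k:ℤ) + a by ring,
      show (j:ℤ) - ((j:ℤ) - a) = (a:ℤ) by ring,
      T_key (j:ℤ) (k:ℤ) (a:ℤ),
      zpow_add₀ q_ne_zero]
    ring
  rw [Finset.sum_congr rfl hterm, ← Finset.mul_sum, vand ((L:ℤ) - k) k j,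
    show (L:ℤ) - k + k = (L:ℤ) by ring]
  ring
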